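/- Let A_n be the 2n×2n symmetric tridiagonal matrix with zero diagonal and off-diagonal entries √b_1, …, √b_{2n−1}, where b_{2k−1} = k(n−k+1) and b_{2k} = k(n−k). Then the characteristic polynomial of A_n equals ∏_{k=1}^{n} (x² − k²); equivalently, the eigenvalues of A_n are exactly ±1, ±2, …, ±n, each with multiplicity 1. -/

import Mathlib

open Polynomial Matrix Finset

variable {R : Type*} [CommRing R]

def triMat (d u v : ℕ → R) (m : ℕ) : Matrix (Fin m) (Fin m) R :=
  Matrix.of fun i j =>
    if (i : ℕ) = j then d i else if (i : ℕ) + 1 = j then u i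
    else if (j : ℕ) + 1 = i then v j else 0

lemma triMat_sub (d u v : ℕ → R) (k : ℕ) :
    (triMat d u v (k + 1)).submatrix Fin.castSucc Fin.castSucc = triMat d u v k := by
  ext i j
  simp only [submatrix_apply, triMat, of_apply, Fin.coe_castSucc]

theorem triMat_det_rec (d u v : ℕ → R) (m : ℕ) :
    (triMat d u v (m + 2)).det =
      d (m + 1) * (triMat d u v (m + 1)).det - u m * v m * (triMat d u v m).det := by
  set M := triMat d u v (m + 2) with hM
  rw [Matrix.det_succ_row M (Fin.last (m + 1))]
  rw [Fin.sum_univ_castSucc, Fin.sum_univ_castSucc]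
  have hz : ∀ j : Fin m,
      (-1 : R) ^ ((Fin.last (m+1) : ℕ) + ((j.castSucc.castSucc : Fin (m+2)) : ℕ)) *
        M (Fin.last (m+1)) j.castSucc.castSucc *
        (M.submatrix (Fin.last (m+1)).succAbove (j.castSucc.castSucc).succAbove).det = 0 := by
    intro j
    have hj : (j : ℕ) < m := j.isLt
    have : M (Fin.last (m+1)) j.castSucc.castSucc = 0 := by
      simp only [hM, triMat, of_apply, Fin.val_last, Fin.coe_castSucc]
      rw [if_neg (by omega), if_neg (by omega), if_neg (by omega)]
    rw [this, mul_zero, zero_mul]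
  rw [Finset.sum_eq_zero (fun j _ => hz j), zero_add]
  -- term j = last : diagonal
  have hdiag : M (Fin.last (m+1)) (Fin.last (m+1)) = d (m+1) := by
    simp only [hM, triMat, of_apply, Fin.val_last, if_pos rfl, if_true]
  have hsign1 : (-1 : R) ^ ((Fin.last (m+1) : ℕ) + ((Fin.last (m+1) : Fin (m+2)) : ℕ)) = 1 := by
    simp only [Fin.val_last]
    exact Even.neg_one_pow ⟨m + 1, by ring⟩
  have hsub1 : M.submatrix (Fin.last (m+1)).succAbove (Fin.last (m+1)).succAbove
      = triMat d u v (m+1) := by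
    rw [Fin.succAbove_last, hM, triMat_sub]
  -- term j = castSucc (last m) : value v m
  have hvent : M (Fin.last (m+1)) ((Fin.last m).castSucc) = v m := by
    simp only [hM, triMat, of_apply, Fin.val_last, Fin.coe_castSucc]
    rw [if_neg (by omega), if_neg (by omega), if_pos trivial]
  have hsign2 : (-1 : R) ^ ((Fin.last (m+1) : ℕ) + (((Fin.last m).castSucc : Fin (m+2)) : ℕ))
      = -1 := by
    simp only [Fin.val_last, Fin.coe_castSucc]
    exact Odd.neg_one_pow ⟨m, by ring⟩
  -- inner minor
  set N := M.submatrix (Fin.last (m+1)).succAbove ((Fin.last m).castSucc : Fin (m+2)).succAbove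
    with hN
  have hNdet : N.det = u m * (triMat d u v m).det := by
    rw [Matrix.det_succ_column N (Fin.last m)]
    rw [Finset.sum_eq_single (Fin.last m)]
    · have hent : N (Fin.last m) (Fin.last m) = u m := by
        simp only [hN, submatrix_apply, Fin.succAbove_last]
        have hcol : ((Fin.last m).castSucc : Fin (m+2)).succAbove (Fin.last m)
            = Fin.last (m+1) := by
          rw [Fin.succAbove_of_le_castSucc _ _ (le_refl _)]
          exact Fin.succ_last m
        rw [hcol]
        simp only [hM, triMat, of_apply, Fin.coe_castSucc, Fin.val_last]
        rw [if_neg (by omega), if_pos trivial]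
      have hsgn : (-1 : R) ^ ((Fin.last m : ℕ) + ((Fin.last m : Fin (m+1)) : ℕ)) = 1 := by
        simp only [Fin.val_last]
        exact Even.neg_one_pow ⟨m, by ring⟩
      have hmin : N.submatrix (Fin.last m).succAbove (Fin.last m).succAbove
          = triMat d u v m := by
        ext i j
        simp only [hN, submatrix_apply, Fin.succAbove_last]
        have hcol : ((Fin.last m).castSucc : Fin (m+2)).succAbove j.castSucc
            = j.castSucc.castSucc := by
          refine Fin.succAbove_of_castSucc_lt _ _ ?_
          simp only [Fin.lt_def, Fin.coe_castSucc, Fin.val_last]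
          exact j.isLt
        rw [hcol]
        simp only [hM, triMat, of_apply, Fin.coe_castSucc]
      rw [hent, hsgn, hmin, one_mul]
    · intro k _ hk
      have hkm : (k : ℕ) < m := Fin.val_lt_last hk
      have : N k (Fin.last m) = 0 := by
        simp only [hN, submatrix_apply, Fin.succAbove_last]
        have hcol : ((Fin.last m).castSucc : Fin (m+2)).succAbove (Fin.last m)
            = Fin.last (m+1) := by
          rw [Fin.succAbove_of_le_castSucc _ _ (le_refl _)]
          exact Fin.succ_last m
        rw [hcol]
        simp only [hM, triMat, of_apply, Fin.coe_castSucc, Fin.val_last]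
        rw [if_neg (by omega), if_neg (by omega), if_neg (by omega)]
      rw [this, mul_zero, zero_mul]
    · intro h
      exact absurd (Finset.mem_univ _) h
  rw [hdiag, hsign1, hsub1, hvent, hsign2, hNdet]
  ring



noncomputable section
def ffr (x : ℝ) (i : ℕ) : ℝ := ∏ t ∈ range i, (x - t)
def prr (x : ℝ) (i : ℕ) : ℝ := ∏ t ∈ range i, (x + t)

lemma ffr_succ (x : ℝ) (i : ℕ) : ffr x (i+1) = ffr x i * (x - i) := prod_range_succ _ _
lemma prr_succ (x : ℝ) (i : ℕ) : prr x (i+1) = prr x i * (x + i) := prod_range_succ _ _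

lemma ffr_succ' (x : ℝ) (i : ℕ) : ffr x (i+1) = x * ffr (x-1) i := by
  rw [ffr, prod_range_succ', ffr]
  rw [show (x - (0:ℕ)) = x by push_cast; ring, mul_comm]
  congr 1
  exact Finset.prod_congr rfl fun t _ => by push_cast; ring

lemma prr_succ' (x : ℝ) (i : ℕ) : prr x (i+1) = x * prr (x+1) i := by
  rw [prr, prod_range_succ', prr]
  rw [show (x + (0:ℕ)) = x by push_cast; ring, mul_comm]
  congr 1
  exact Finset.prod_congr rfl fun t _ => by push_cast; ring

lemma ffr_key (x : ℝ) (j : ℕ) : ffr (x+1) j * (x+1-j) = (x+1) * ffr x j := by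
  rw [← ffr_succ, ffr_succ', add_sub_cancel_right]

def aco (n m i : ℕ) : ℝ := (-1)^i * (ffr m i)^2 * prr ((n:ℝ) - m) i / (i.factorial)
def dco (n m i : ℕ) : ℝ :=
  (-1)^i * (ffr m i * ffr ((m:ℝ)+1) i) * prr ((n:ℝ) - m) i / (i.factorial)

lemma aco_zero (n m : ℕ) : aco n m 0 = 1 := by simp [aco, ffr, prr]
lemma dco_zero (n m : ℕ) : dco n m 0 = 1 := by simp [dco, ffr, prr]

lemma ffr_nat_top (m : ℕ) : ffr m (m+1) = 0 := by
  refine Finset.prod_eq_zero (Finset.self_mem_range_succ m) ?_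
  simp

lemma aco_top (n m : ℕ) : aco n m (m+1) = 0 := by
  rw [aco, ffr_nat_top]; ring

lemma dco_top (n m : ℕ) : dco n m (m+1) = 0 := by
  rw [dco, ffr_nat_top]; ring

lemma prr_zero (i : ℕ) : prr 0 (i+1) = 0 := by
  refine Finset.prod_eq_zero (Finset.mem_range.2 (Nat.succ_pos i)) ?_
  simp

lemma aco_diag (n i : ℕ) : aco n n (i+1) = 0 := by
  rw [aco, show ((n:ℝ) - n) = 0 by ring, prr_zero]; ring

lemma id1 (n m j : ℕ) :
    dco n (m+1) (j+1) = aco n (m+1) (j+1)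
      - ((m:ℝ)+1) * ((n:ℝ)-((m:ℝ)+1)) * dco n m j := by
  have hkey := ffr_key (m:ℝ) j
  have e1 : ffr ((m:ℝ)+1) (j+1) = ((m:ℝ)+1) * ffr (m:ℝ) j := by
    rw [ffr_succ', add_sub_cancel_right]
  have e2 : ffr ((m:ℝ)+1+1) (j+1) = ((m:ℝ)+2) * ffr ((m:ℝ)+1) j := by
    rw [ffr_succ']
    rw [show ((m:ℝ)+1+1-1) = (m:ℝ)+1 by ring]
    ring
  have e3 : prr ((n:ℝ)-((m:ℝ)+1)) (j+1) = ((n:ℝ)-(m:ℝ)-1) * prr ((n:ℝ)-(m:ℝ)) j := by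
    rw [prr_succ']
    rw [show ((n:ℝ)-((m:ℝ)+1)+1) = (n:ℝ)-(m:ℝ) by ring]
    ring
  have hfac : (((j+1).factorial : ℕ) : ℝ) = ((j:ℝ)+1) * (j.factorial) := by
    rw [Nat.factorial_succ]; push_cast; ring
  have h0 : ((j.factorial : ℕ) : ℝ) ≠ 0 := Nat.cast_ne_zero.mpr (Nat.factorial_ne_zero j)
  have h1 : ((j:ℝ)+1) ≠ 0 := by positivity
  simp only [aco, dco]
  push_cast
  rw [e1, e2, e3, hfac]
  field_simp
  linear_combination (-(-1:ℝ)^j * ((n:ℝ)-(m:ℝ)-1) * prr ((n:ℝ)-(m:ℝ)) j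
    * ffr (m:ℝ) j) * hkey

lemma id2 (n m j : ℕ) :
    aco n (m+1) (j+1) = dco n m (j+1) + ((m:ℝ)+1-(j:ℝ))^2 * dco n m j
      - ((m:ℝ)+1) * ((n:ℝ)-(m:ℝ)) * aco n m j := by
  have hkey := ffr_key (m:ℝ) j
  have e1 : ffr ((m:ℝ)+1) (j+1) = ((m:ℝ)+1) * ffr (m:ℝ) j := by
    rw [ffr_succ', add_sub_cancel_right]
  have e3 : prr ((n:ℝ)-((m:ℝ)+1)) (j+1) = ((n:ℝ)-(m:ℝ)-1) * prr ((n:ℝ)-(m:ℝ)) j := by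
    rw [prr_succ']
    rw [show ((n:ℝ)-((m:ℝ)+1)+1) = (n:ℝ)-(m:ℝ) by ring]
    ring
  have e4 : ffr (m:ℝ) (j+1) = ffr (m:ℝ) j * ((m:ℝ)-(j:ℝ)) := ffr_succ _ _
  have e5 : prr ((n:ℝ)-(m:ℝ)) (j+1) = prr ((n:ℝ)-(m:ℝ)) j * ((n:ℝ)-(m:ℝ)+(j:ℝ)) :=
    prr_succ _ _
  have hfac : (((j+1).factorial : ℕ) : ℝ) = ((j:ℝ)+1) * (j.factorial) := by
    rw [Nat.factorial_succ]; push_cast; ring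
  have h0 : ((j.factorial : ℕ) : ℝ) ≠ 0 := Nat.cast_ne_zero.mpr (Nat.factorial_ne_zero j)
  have h1 : ((j:ℝ)+1) ≠ 0 := by positivity
  simp only [aco, dco]
  push_cast
  rw [e1, e3, e4, e5, hfac]
  field_simp
  linear_combination (-(-1:ℝ)^j * prr ((n:ℝ)-(m:ℝ)) j * ffr (m:ℝ) j
    * ((j:ℝ)+1) * ((m:ℝ)+1-(j:ℝ))) * hkey

def fpoly : ℕ → ℝ[X] := fun j => ∏ k ∈ range j, (X^2 - C (((k:ℝ)+1)^2))

def Qp (n m : ℕ) : ℝ[X] := ∑ i ∈ range (m+1), C (aco n m i) * fpoly (m - i)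
def Rp (n m : ℕ) : ℝ[X] := ∑ i ∈ range (m+1), C (dco n m i) * (X * fpoly (m - i))

lemma fpoly_succ (j : ℕ) : fpoly (j+1) = fpoly j * (X^2 - C (((j:ℝ)+1)^2)) :=
  prod_range_succ _ _

lemma fsq (j : ℕ) : X * (X * fpoly j) = fpoly (j+1) + C (((j:ℝ)+1)^2) * fpoly j := by
  rw [fpoly_succ]; ring

lemma Qp_zero (n : ℕ) : Qp n 0 = 1 := by
  simp [Qp, aco_zero, fpoly]

lemma Rp_zero (n : ℕ) : Rp n 0 = X := by
  simp [Rp, dco_zero, fpoly]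

lemma Qp_top (n : ℕ) : Qp n n = fpoly n := by
  rw [Qp, Finset.sum_range_succ' _ n]
  rw [Finset.sum_eq_zero (fun j _ => by rw [aco_diag, _root_.map_zero, zero_mul])]
  simp [aco_zero]

lemma rrec (n m : ℕ) :
    X * Qp n (m+1) - C (((m:ℝ)+1)*((n:ℝ)-((m:ℝ)+1))) * Rp n m = Rp n (m+1) := by
  rw [Qp, Rp, Rp, Finset.mul_sum, Finset.mul_sum,
    Finset.sum_range_succ' (fun i => X * (C (aco n (m+1) i) * fpoly (m+1 - i))) (m+1),
    Finset.sum_range_succ' (fun i => C (dco n (m+1) i) * (X * fpoly (m+1 - i))) (m+1)]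
  simp only [Nat.succ_sub_succ, Nat.sub_zero]
  rw [add_sub_right_comm]
  congr 1
  · rw [← Finset.sum_sub_distrib]
    refine Finset.sum_congr rfl fun j _ => ?_
    rw [id1 n m j]
    simp only [_root_.map_add, _root_.map_sub, _root_.map_mul]
    ring
  · rw [aco_zero, dco_zero]; ring

lemma qrec (n m : ℕ) :
    X * Rp n m - C (((m:ℝ)+1)*((n:ℝ)-(m:ℝ))) * Qp n m = Qp n (m+1) := by
  rw [Rp, Qp, Qp, Finset.mul_sum, Finset.mul_sum]
  have step1 : ∑ i ∈ range (m+1), X * (C (dco n m i) * (X * fpoly (m-i)))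
      = (∑ i ∈ range (m+1), C (dco n m i) * fpoly (m-i+1))
        + ∑ i ∈ range (m+1), C (dco n m i * (((m:ℝ)-(i:ℝ)+1)^2)) * fpoly (m-i) := by
    rw [← Finset.sum_add_distrib]
    refine Finset.sum_congr rfl fun i hi => ?_
    have hi' : i ≤ m := Nat.lt_succ_iff.mp (Finset.mem_range.mp hi)
    have hc : (((m-i : ℕ)):ℝ) = (m:ℝ) - (i:ℝ) := by
      rw [Nat.cast_sub hi']
    rw [show X * (C (dco n m i) * (X * fpoly (m-i)))
        = C (dco n m i) * (X * (X * fpoly (m-i))) by ring, fsq, hc]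
    simp only [_root_.map_mul]
    ring
  have step2 : ∑ i ∈ range (m+1), C (dco n m i) * fpoly (m-i+1)
      = (∑ j ∈ range (m+1), C (dco n m (j+1)) * fpoly (m-j)) + fpoly (m+1) := by
    rw [Finset.sum_range_succ' (fun i => C (dco n m i) * fpoly (m-i+1)) m]
    rw [Finset.sum_range_succ (fun j => C (dco n m (j+1)) * fpoly (m-j)) m]
    rw [dco_top, _root_.map_zero, zero_mul, add_zero, dco_zero, _root_.map_one, one_mul, Nat.sub_zero]
    congr 1
    refine Finset.sum_congr rfl fun j hj => ?_
    have : m - (j+1) + 1 = m - j := by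
      have := Finset.mem_range.mp hj; omega
    rw [this]
  rw [step1, step2,
    Finset.sum_range_succ' (fun i => C (aco n (m+1) i) * fpoly (m+1 - i)) (m+1)]
  simp only [Nat.succ_sub_succ, Nat.sub_zero]
  rw [aco_zero, _root_.map_one, one_mul]
  rw [show (∑ j ∈ range (m+1), C (dco n m (j+1)) * fpoly (m-j)) + fpoly (m+1)
      + (∑ i ∈ range (m+1), C (dco n m i * (((m:ℝ)-(i:ℝ)+1)^2)) * fpoly (m-i))
      - (∑ i ∈ range (m+1), C (((m:ℝ)+1)*((n:ℝ)-(m:ℝ))) * (C (aco n m i) * fpoly (m-i)))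
      = ((∑ j ∈ range (m+1), C (dco n m (j+1)) * fpoly (m-j))
        + (∑ i ∈ range (m+1), C (dco n m i * (((m:ℝ)-(i:ℝ)+1)^2)) * fpoly (m-i))
        - (∑ i ∈ range (m+1), C (((m:ℝ)+1)*((n:ℝ)-(m:ℝ))) * (C (aco n m i) * fpoly (m-i))))
        + fpoly (m+1) by ring]
  congr 1
  rw [← Finset.sum_add_distrib, ← Finset.sum_sub_distrib]
  refine Finset.sum_congr rfl fun j _ => ?_
  rw [id2 n m j]
  simp only [_root_.map_add, _root_.map_sub, _root_.map_mul]
  ring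


def PfunAux (b : ℕ → ℝ) : ℕ → ℝ[X] × ℝ[X]
  | 0 => (1, X)
  | (m+1) => ((PfunAux b m).2, X * (PfunAux b m).2 - C (b (m+1)) * (PfunAux b m).1)

def Pfun (b : ℕ → ℝ) (m : ℕ) : ℝ[X] := (PfunAux b m).1

lemma Pfun_zero (b : ℕ → ℝ) : Pfun b 0 = 1 := rfl
lemma Pfun_one (b : ℕ → ℝ) : Pfun b 1 = X := rfl
lemma Pfun_add_two (b : ℕ → ℝ) (m : ℕ) :
    Pfun b (m+2) = X * Pfun b (m+1) - C (b (m+1)) * Pfun b m := by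
  simp [Pfun, PfunAux]

end

open Polynomial Matrix in
theorem stmt_9 (n : ℕ) (hn : 0 < n) (b : ℕ → ℝ)
    (hb1 : ∀ k : ℕ, 1 ≤ k → k ≤ n → b (2 * k - 1) = k * (n - k + 1))
    (hb2 : ∀ k : ℕ, 1 ≤ k → k ≤ n - 1 → b (2 * k) = k * (n - k))
    (A : Matrix (Fin (2 * n)) (Fin (2 * n)) ℝ)
    (hA : ∀ i j : Fin (2 * n),
      A i j = if (i : ℕ) + 1 = j ∨ (j : ℕ) + 1 = i
        then Real.sqrt (b (min (i : ℕ) (j : ℕ) + 1)) else 0) :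
    A.charpoly = ∏ k ∈ Finset.Icc 1 n,
      (Polynomial.X ^ 2 - Polynomial.C ((k : ℝ) ^ 2)) := by
  classical
  -- nonnegativity of the weights
  have hbnn : ∀ s : ℕ, 1 ≤ s → s ≤ 2*n - 1 → 0 ≤ b s := by
    intro s h1 h2
    rcases Nat.even_or_odd s with ⟨k, hk⟩ | ⟨k, hk⟩
    · have hk1 : 1 ≤ k := by omega
      have hk2 : k ≤ n - 1 := by omega
      have hb := hb2 k hk1 hk2
      rw [show s = 2*k from by omega, hb]
      have hkn : (k:ℝ) ≤ (n:ℝ) := by exact_mod_cast (by omega : k ≤ n)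
      have : (0:ℝ) ≤ (k:ℝ) := by positivity
      nlinarith
    · have hk1 : 1 ≤ k + 1 := by omega
      have hk2 : k + 1 ≤ n := by omega
      have hb := hb1 (k+1) hk1 hk2
      rw [show s = 2*(k+1) - 1 from by omega, hb]
      have hkn : ((k:ℝ)+1) ≤ (n:ℝ) := by exact_mod_cast hk2
      have : (0:ℝ) ≤ (k:ℝ) := by positivity
      push_cast
      nlinarith
  set uu : ℕ → ℝ[X] := fun i => -C (Real.sqrt (b (i+1))) with huu
  have hsq : ∀ s : ℕ, 1 ≤ s + 1 → s + 1 ≤ 2*n - 1 → uu s * uu s = C (b (s+1)) := by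
    intro s h1 h2
    rw [huu]
    simp only [neg_mul_neg, ← _root_.map_mul]
    rw [Real.mul_self_sqrt (hbnn (s+1) h1 h2)]
  -- the characteristic matrix is tridiagonal
  have hchar : charmatrix A = triMat (fun _ => (X:ℝ[X])) uu uu (2*n) := by
    apply Matrix.ext
    intro i j
    by_cases hij : i = j
    · subst hij
      rw [charmatrix_apply_eq]
      have hz : A i i = 0 := by
        rw [hA]
        rw [if_neg]
        push_neg
        omega
      rw [hz, _root_.map_zero, sub_zero]
      simp [triMat]
    · rw [charmatrix_apply_ne _ _ _ hij]
      have hvij : (i : ℕ) ≠ (j : ℕ) := fun h => hij (Fin.ext h)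
      rw [hA]
      by_cases h1 : (i:ℕ)+1 = j
      · rw [if_pos (Or.inl h1)]
        simp only [triMat, of_apply]
        rw [if_neg hvij, if_pos h1, huu]
        have : min (i:ℕ) (j:ℕ) = (i:ℕ) := by omega
        rw [this]
      · by_cases h2 : (j:ℕ)+1 = i
        · rw [if_pos (Or.inr h2)]
          simp only [triMat, of_apply]
          rw [if_neg hvij, if_neg h1, if_pos h2, huu]
          have : min (i:ℕ) (j:ℕ) = (j:ℕ) := by omega
          rw [this]
        · rw [if_neg (by push_neg; exact ⟨h1, h2⟩)]
          simp only [triMat, of_apply]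
          rw [if_neg hvij, if_neg h1, if_neg h2, _root_.map_zero, neg_zero]
  -- determinants of principal minors are the continuants
  have hdet : ∀ m, m ≤ 2*n → (triMat (fun _ => (X:ℝ[X])) uu uu m).det = Pfun b m := by
    intro m
    induction m using Nat.strong_induction_on with
    | _ m ih =>
      match m with
      | 0 => intro _; rw [Matrix.det_fin_zero, Pfun_zero]
      | 1 =>
        intro _
        rw [Matrix.det_fin_one, Pfun_one]
        simp [triMat]
      | (m+2) =>
        intro h
        rw [triMat_det_rec, ih (m+1) (by omega) (by omega), ih m (by omega) (by omega),
          hsq m (by omega) (by omega), Pfun_add_two]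
  -- the continuants in closed form
  have claim : ∀ m, m ≤ n →
      Pfun b (2*m) = Qp n m ∧ (m < n → Pfun b (2*m+1) = Rp n m) := by
    intro m
    induction m with
    | zero =>
      intro _
      constructor
      · rw [Qp_zero, show 2*0 = 0 from rfl, Pfun_zero]
      · intro _; rw [Rp_zero, show 2*0+1 = 1 from rfl, Pfun_one]
    | succ m ih =>
      intro h
      obtain ⟨ihq, ihr⟩ := ih (by omega)
      have hbo : b (2*m+1) = ((m:ℝ)+1) * ((n:ℝ)-(m:ℝ)) := by
        have hb := hb1 (m+1) (by omega) (by omega)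
        rw [show 2*(m+1) - 1 = 2*m+1 from by omega] at hb
        rw [hb]
        push_cast
        ring
      have heven : Pfun b (2*(m+1)) = Qp n (m+1) := by
        rw [show 2*(m+1) = (2*m)+2 from by ring, Pfun_add_two]
        rw [ihq, ihr (by omega), hbo]
        exact qrec n m
      refine ⟨heven, fun h' => ?_⟩
      have hbe : b (2*(m+1)) = ((m:ℝ)+1) * ((n:ℝ)-((m:ℝ)+1)) := by
        rw [hb2 (m+1) (by omega) (by omega)]
        push_cast
        ring
      rw [show 2*(m+1)+1 = (2*m+1)+2 from by ring, Pfun_add_two]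
      rw [show (2*m+1+1 : ℕ) = 2*(m+1) from by ring, heven, ihr (by omega), hbe]
      exact rrec n m
  -- assemble
  have h1 : A.charpoly = Pfun b (2*n) := by
    rw [Matrix.charpoly, hchar]
    exact hdet (2*n) le_rfl
  rw [h1, (claim n le_rfl).1, Qp_top, fpoly]
  rw [show Finset.Icc 1 n = Finset.Ico 1 (n+1) from by rw [Finset.Ico_add_one_right_eq_Icc]]
  rw [Finset.prod_Ico_eq_prod_range]
  refine Finset.prod_congr (by norm_num) fun k _ => ?_
  congr 2
  push_cast
  ring
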